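/- Suppose k₂ = 0, b > 0, β₁k₁ ≤ b + α, and the nonnegative parameters b, α, β₁, β₂, k₁, k₂ satisfy conditions (C). Then for every initial point λ⁰ ∈ S³, the sequence of iterates Vⁿ(λ⁰) converges to λ₁ = (1,0,0,0) as n → ∞. -/
import Mathlib

/-- The discrete-time SISI epidemic operator. -/
noncomputable def sisiV (b α β₁ β₂ k₁ k₂ : ℝ) (p : ℝ × ℝ × ℝ × ℝ) : ℝ × ℝ × ℝ × ℝ :=
  (p.1 + b - b * p.1 - β₁ * (k₁ * p.2.1 + k₂ * p.2.2.2) * p.1,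
   p.2.1 - b * p.2.1 - α * p.2.1 + β₁ * (k₁ * p.2.1 + k₂ * p.2.2.2) * p.1,
   p.2.2.1 - b * p.2.2.1 + α * p.2.1 - β₂ * (k₁ * p.2.1 + k₂ * p.2.2.2) * p.2.2.1,
   p.2.2.2 - b * p.2.2.2 + β₂ * (k₁ * p.2.1 + k₂ * p.2.2.2) * p.2.2.1)

/-- The simplex S³ in ℝ⁴. -/
def simplexS3 : Set (ℝ × ℝ × ℝ × ℝ) :=
  {p | 0 ≤ p.1 ∧ 0 ≤ p.2.1 ∧ 0 ≤ p.2.2.1 ∧ 0 ≤ p.2.2.2 ∧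
       p.1 + p.2.1 + p.2.2.1 + p.2.2.2 = 1}

/-- Conditions (C) on the parameters. -/
def condC (b α β₁ β₂ k₁ k₂ : ℝ) : Prop :=
  α + b ≤ 1 ∧ β₁ * k₂ ≤ 2 ∧ β₂ * k₁ ≤ 2 ∧ b + β₂ * k₂ ≤ 1 ∧
  |b - β₁ * k₁| ≤ 1 ∧ |b - β₂ * k₂| ≤ 1 ∧ |b - β₁ * k₂| ≤ 1 ∧
  |α + b - β₁ * k₁| ≤ 1 ∧ |α - b - β₂ * k₁| ≤ 1

open Filter in
lemma aux_geom_tendsto_zero {a e : ℕ → ℝ} {r : ℝ} (hr0 : 0 ≤ r) (hr1 : r < 1)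
    (ha0 : ∀ n, 0 ≤ a n) (ha1 : ∀ n, a n ≤ 1)
    (hrec : ∀ n, a (n + 1) ≤ r * a n + e n)
    (he0 : ∀ n, 0 ≤ e n)
    (he : Tendsto e atTop (nhds 0)) :
    Tendsto a atTop (nhds 0) := by
  rw [Metric.tendsto_atTop] at he ⊢
  intro ε hε
  have h1r : 0 < 1 - r := by linarith
  obtain ⟨M, hM⟩ := he ((1 - r) * ε / 4) (by positivity)
  obtain ⟨K, hK⟩ := exists_pow_lt_of_lt_one (half_pos hε) hr1
  have claim : ∀ k, a (M + k) ≤ r ^ k + ε / 4 := by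
    intro k
    induction k with
    | zero => have := ha1 M; simpa using by linarith
    | succ k ih =>
      have h1 := hrec (M + k)
      have h2 := hM (M + k) (Nat.le_add_right M k)
      rw [Real.dist_eq, sub_zero, abs_of_nonneg (he0 _)] at h2
      have h3 : r * a (M + k) ≤ r * (r ^ k + ε / 4) :=
        mul_le_mul_of_nonneg_left ih hr0
      have h4 : a (M + k + 1) ≤ r ^ (k + 1) + ε / 4 := by
        rw [pow_succ]
        nlinarith
      rw [show M + (k + 1) = M + k + 1 from rfl]
      exact h4
  refine ⟨M + K, fun n hn => ?_⟩
  rw [Real.dist_eq, sub_zero, abs_of_nonneg (ha0 _)]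
  have h4 := claim (n - M)
  rw [show M + (n - M) = n by omega] at h4
  have h5 : r ^ (n - M) ≤ r ^ K := pow_le_pow_of_le_one hr0 hr1.le (by omega)
  linarith

open Filter in
lemma aux_logistic_tendsto_zero {u : ℕ → ℝ} {c K : ℝ} (hc : 0 ≤ c) (hK : 0 ≤ K)
    (hcK : 0 < c + K) (hu0 : ∀ n, 0 ≤ u n)
    (hrec : ∀ n, u (n + 1) ≤ u n - c * u n - K * u n ^ 2) :
    Tendsto u atTop (nhds 0) := by
  have hmono : Antitone u := antitone_nat_of_succ_le fun n => by
    nlinarith [hu0 n, sq_nonneg (u n), hrec n, mul_nonneg hc (hu0 n),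
      mul_nonneg hK (sq_nonneg (u n))]
  have hbdd : BddBelow (Set.range u) := ⟨0, by rintro x ⟨n, rfl⟩; exact hu0 n⟩
  have hlim := tendsto_atTop_ciInf hmono hbdd
  set L := ⨅ n, u n with hLdef
  have hL0 : 0 ≤ L := le_ciInf hu0
  have h1 : Tendsto (fun n => u (n + 1)) atTop (nhds L) :=
    hlim.comp (tendsto_add_atTop_nat 1)
  have h2 : Tendsto (fun n => u n - c * u n - K * u n ^ 2) atTop
      (nhds (L - c * L - K * L ^ 2)) :=
    (hlim.sub (hlim.const_mul c)).sub ((hlim.pow 2).const_mul K)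
  have hle : L ≤ L - c * L - K * L ^ 2 := le_of_tendsto_of_tendsto' h1 h2 hrec
  have hL : L = 0 := by
    rcases hL0.lt_or_eq with hL | hL
    · exfalso
      have hcL : c * L = 0 :=
        le_antisymm (by nlinarith [mul_nonneg hK (sq_nonneg L)]) (mul_nonneg hc hL0)
      have hKL : K * L ^ 2 = 0 :=
        le_antisymm (by nlinarith [mul_nonneg hc hL0]) (mul_nonneg hK (sq_nonneg L))
      have hc0 : c = 0 := by
        rcases mul_eq_zero.mp hcL with h | h
        · exact h
        · linarith
      have hK0 : K = 0 := by
        rcases mul_eq_zero.mp hKL with h | h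
        · exact h
        · nlinarith
      linarith
    · exact hL.symm
  rw [hL] at hlim
  exact hlim

set_option maxHeartbeats 1000000 in
theorem converges_to_lam1 (b α β₁ β₂ k₁ k₂ : ℝ)
    (hk₂ : k₂ = 0) (hb : 0 < b)
    (hα : 0 ≤ α) (hβ₁ : 0 ≤ β₁) (hβ₂ : 0 ≤ β₂) (hk₁ : 0 ≤ k₁)
    (hle : β₁ * k₁ ≤ b + α) (hC : condC b α β₁ β₂ k₁ k₂) :
    ∀ lam0 ∈ simplexS3,
      Filter.Tendsto (fun n => (sisiV b α β₁ β₂ k₁ k₂)^[n] lam0)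
        Filter.atTop (nhds (((1 : ℝ), (0 : ℝ), (0 : ℝ), (0 : ℝ)))) := by
  subst hk₂
  obtain ⟨hC1, hC2, hC3, hC4, hC5, hC6, hC7, hC8, hC9⟩ := hC
  intro lam0 hlam0
  have hm0 : 0 ≤ β₁ * k₁ := mul_nonneg hβ₁ hk₁
  have hcc0 : 0 ≤ β₂ * k₁ := mul_nonneg hβ₂ hk₁
  have hb1 : b ≤ 1 := by linarith
  have hm1 : β₁ * k₁ ≤ 1 := by linarith
  have hcc1 : β₂ * k₁ ≤ 1 + α - b := by
    have := (abs_le.mp hC9).1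
    linarith
  -- invariance of the simplex
  have hinv : ∀ p ∈ simplexS3, sisiV b α β₁ β₂ k₁ 0 p ∈ simplexS3 := by
    rintro ⟨x, u, y, v⟩ ⟨hx0, hu0, hy0, hv0, hsum⟩
    simp only [simplexS3, Set.mem_setOf_eq, sisiV]
    refine ⟨?_, ?_, ?_, ?_, by linear_combination (1 - b) * hsum⟩
    · nlinarith [mul_nonneg (by linarith : (0:ℝ) ≤ 1 - β₁ * k₁) (mul_nonneg hu0 hx0),
        mul_nonneg (by linarith : (0:ℝ) ≤ 1 - x - u) hx0,
        mul_nonneg hb.le (by linarith : (0:ℝ) ≤ 1 - x)]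
    · nlinarith [mul_nonneg hu0 (by linarith : (0:ℝ) ≤ 1 - b - α),
        mul_nonneg hm0 (mul_nonneg hu0 hx0)]
    · nlinarith [mul_nonneg (by linarith : (0:ℝ) ≤ 1 + α - b - β₂ * k₁)
          (mul_nonneg hu0 hy0),
        mul_nonneg (mul_nonneg hα hu0) (by linarith : (0:ℝ) ≤ 1 - u - y),
        mul_nonneg (mul_nonneg (by linarith : (0:ℝ) ≤ 1 - b) hy0)
          (by linarith : (0:ℝ) ≤ 1 - u),
        mul_nonneg hα (sq_nonneg u)]
    · nlinarith [mul_nonneg hv0 (by linarith : (0:ℝ) ≤ 1 - b),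
        mul_nonneg hcc0 (mul_nonneg hu0 hy0)]
  have hmem : ∀ n, (sisiV b α β₁ β₂ k₁ 0)^[n] lam0 ∈ simplexS3 := by
    intro n
    induction n with
    | zero => simpa using hlam0
    | succ n ih => rw [Function.iterate_succ_apply']; exact hinv _ ih
  set x : ℕ → ℝ := fun n => ((sisiV b α β₁ β₂ k₁ 0)^[n] lam0).1 with hxdef
  set u : ℕ → ℝ := fun n => ((sisiV b α β₁ β₂ k₁ 0)^[n] lam0).2.1 with hudef
  set y : ℕ → ℝ := fun n => ((sisiV b α β₁ β₂ k₁ 0)^[n] lam0).2.2.1 with hydef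
  set v : ℕ → ℝ := fun n => ((sisiV b α β₁ β₂ k₁ 0)^[n] lam0).2.2.2 with hvdef
  have hs : ∀ n, 0 ≤ x n ∧ 0 ≤ u n ∧ 0 ≤ y n ∧ 0 ≤ v n ∧
      x n + u n + y n + v n = 1 := fun n => hmem n
  have hstep : ∀ n,
      x (n + 1) = x n + b - b * x n - β₁ * (k₁ * u n + 0 * v n) * x n ∧
      u (n + 1) = u n - b * u n - α * u n + β₁ * (k₁ * u n + 0 * v n) * x n ∧
      y (n + 1) = y n - b * y n + α * u n - β₂ * (k₁ * u n + 0 * v n) * y n ∧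
      v (n + 1) = v n - b * v n + β₂ * (k₁ * u n + 0 * v n) * y n := by
    intro n
    have h := Function.iterate_succ_apply' (sisiV b α β₁ β₂ k₁ 0) n lam0
    refine ⟨?_, ?_, ?_, ?_⟩ <;>
      simp only [hxdef, hudef, hydef, hvdef, h, sisiV]
  -- u tends to 0
  have hu_rec : ∀ n, u (n + 1) ≤ u n - (b + α - β₁ * k₁) * u n - β₁ * k₁ * u n ^ 2 := by
    intro n
    obtain ⟨hx0, hu0, hy0, hv0, hsum⟩ := hs n
    have hrec := (hstep n).2.1
    nlinarith [mul_nonneg hm0 (mul_nonneg hu0 (by linarith : (0:ℝ) ≤ 1 - u n - x n))]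
  have hu_tendsto : Filter.Tendsto u Filter.atTop (nhds 0) :=
    aux_logistic_tendsto_zero (by linarith) hm0 (by linarith)
      (fun n => (hs n).2.1) hu_rec
  -- y tends to 0
  have hy_rec : ∀ n, y (n + 1) ≤ (1 - b) * y n + u n := by
    intro n
    obtain ⟨hx0, hu0, hy0, hv0, hsum⟩ := hs n
    have hrec := (hstep n).2.2.1
    nlinarith [mul_nonneg hcc0 (mul_nonneg hu0 hy0),
      mul_nonneg hu0 (by linarith : (0:ℝ) ≤ 1 - α)]
  have hy_tendsto : Filter.Tendsto y Filter.atTop (nhds 0) :=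
    aux_geom_tendsto_zero (by linarith) (by linarith)
      (fun n => (hs n).2.2.1)
      (fun n => by obtain ⟨hx0, hu0, hy0, hv0, hsum⟩ := hs n; linarith)
      hy_rec (fun n => (hs n).2.1) hu_tendsto
  -- v tends to 0
  have hv_rec : ∀ n, v (n + 1) ≤ (1 - b) * v n + 2 * u n := by
    intro n
    obtain ⟨hx0, hu0, hy0, hv0, hsum⟩ := hs n
    have hrec := (hstep n).2.2.2
    nlinarith [mul_nonneg (by linarith : (0:ℝ) ≤ 2 - β₂ * k₁) (mul_nonneg hu0 hy0),
      mul_nonneg hu0 (by linarith : (0:ℝ) ≤ 1 - y n)]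
  have hv_tendsto : Filter.Tendsto v Filter.atTop (nhds 0) :=
    aux_geom_tendsto_zero (by linarith) (by linarith)
      (fun n => (hs n).2.2.2.1)
      (fun n => by obtain ⟨hx0, hu0, hy0, hv0, hsum⟩ := hs n; linarith)
      hv_rec (fun n => by have := (hs n).2.1; positivity)
      (by simpa using hu_tendsto.const_mul (2 : ℝ))
  -- x tends to 1
  have hx_tendsto : Filter.Tendsto x Filter.atTop (nhds 1) := by
    have heq : ∀ n, x n = 1 - u n - y n - v n := by
      intro n; obtain ⟨_, _, _, _, hsum⟩ := hs n; linarith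
    have h1 : Filter.Tendsto (fun n => 1 - u n - y n - v n) Filter.atTop (nhds 1) := by
      simpa using ((tendsto_const_nhds.sub hu_tendsto).sub hy_tendsto).sub hv_tendsto
    exact Filter.Tendsto.congr (fun n => (heq n).symm) h1
  exact hx_tendsto.prodMk_nhds (hu_tendsto.prodMk_nhds
    (hy_tendsto.prodMk_nhds hv_tendsto))
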